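/- Let 𝒯 = (T, μ, η) be a monad on a category 𝔹 whose multiplication μ is an isomorphism. Then a morphism a : T.obj X ⟶ X is a 𝒯-algebra structure on X if and only if η.app X ≫ a = 𝟙 X; that is, if η.app X ≫ a = 𝟙 X then the associativity condition T.map a ≫ a = μ.app X ≫ a holds automatically, so that (X, a) is a 𝒯-algebra. -/
import Mathlib

open CategoryTheory

/-- for a monad `𝒯 = (T, μ, η)` with invertible multiplication,
a morphism `a : T X ⟶ X` is a `𝒯`-algebra structure (i.e. satisfies the unit and
associativity laws) if and only if `η.app X ≫ a = 𝟙 X`. -/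
theorem stmt5 {𝔹 : Type*} [Category 𝔹] (T : Monad 𝔹) [IsIso T.μ]
    (X : 𝔹) (a : T.toFunctor.obj X ⟶ X) :
    (T.η.app X ≫ a = 𝟙 X ∧ T.toFunctor.map a ≫ a = T.μ.app X ≫ a) ↔
      T.η.app X ≫ a = 𝟙 X := by
  constructor
  · exact fun h => h.1
  · intro h
    refine ⟨h, ?_⟩
    have hη : T.η.app (T.toFunctor.obj X) = inv (T.μ.app X) := by
      exact IsIso.eq_inv_of_inv_hom_id (T.left_unit X)
    calc T.toFunctor.map a ≫ a
        = T.μ.app X ≫ inv (T.μ.app X) ≫ T.toFunctor.map a ≫ a := by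
          rw [IsIso.hom_inv_id_assoc]
      _ = T.μ.app X ≫ T.η.app (T.toFunctor.obj X) ≫ T.toFunctor.map a ≫ a := by
          rw [hη]
      _ = T.μ.app X ≫ a ≫ T.η.app X ≫ a := by
          have := T.η.naturality a
          simp only [Functor.id_map] at this
          rw [← Category.assoc (T.η.app _), ← this, Category.assoc]
      _ = T.μ.app X ≫ a := by rw [h, Category.comp_id]
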